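/- For all natural numbers k ≥ 2, r ≥ 2, s ≥ 2 and L, setting n = s·k, if max(k, 2r − 1) ≤ L ≤ (s − 1)·k, then there exists a multigraph E : Fin (r·n) → Sym2 (Fin n) that is decodable, has exactly L loop indices, and satisfies m(G) = 2r − 1 and δ_I(G) = 2r − 1. -/

import Mathlib

/-- `e` is a loop index at vertex `v`. -/
def IsLoopIdx {V : Type*} {m : ℕ} (E : Fin m → Sym2 V) (v : V) (e : Fin m) : Prop :=
  E e = Sym2.diag v

/-- `u` and `v` are connected in the multigraph `E` with the edge indices in `S` deleted. -/
def ConnectedMod {V : Type*} {m : ℕ} (E : Fin m → Sym2 V) (S : Finset (Fin m))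
    (u v : V) : Prop :=
  Relation.EqvGen (fun a b => ∃ e : Fin m, e ∉ S ∧ E e = s(a, b)) u v

/-- `G − S` is decodable: every vertex is connected in `G − S` to a vertex with a loop
outside `S`. -/
def DecodableMod {V : Type*} {m : ℕ} (E : Fin m → Sym2 V) (S : Finset (Fin m)) : Prop :=
  ∀ u : V, ∃ v : V, (∃ e : Fin m, e ∉ S ∧ IsLoopIdx E v e) ∧ ConnectedMod E S u v

def IsDecodable {V : Type*} {m : ℕ} (E : Fin m → Sym2 V) : Prop :=
  DecodableMod E ∅

/-- `c_x^G`: the number of `x`-element sets of edge indices whose deletion leaves a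
decodable graph. -/
noncomputable def cG {V : Type*} {m : ℕ} (E : Fin m → Sym2 V) (x : ℕ) : ℕ :=
  Set.ncard {S : Finset (Fin m) | S.card = x ∧ DecodableMod E S}

/-- `k_x^G = C(m,x) − c_x^G`. -/
noncomputable def kG {V : Type*} {m : ℕ} (E : Fin m → Sym2 V) (x : ℕ) : ℕ :=
  Nat.choose m x - cG E x

/-- `m(G)`: the minimum cardinality of a loop cut. -/
noncomputable def mCut {V : Type*} {m : ℕ} (E : Fin m → Sym2 V) : ℕ :=
  sInf {k : ℕ | ∃ S : Finset (Fin m), S.card = k ∧ ¬ DecodableMod E S}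

/-- incidence degree of `v` (a loop at `v` counts once). -/
noncomputable def dI {V : Type*} {m : ℕ} (E : Fin m → Sym2 V) (v : V) : ℕ :=
  Set.ncard {e : Fin m | v ∈ E e}

/-- `δ_I(G)`: the minimum incidence degree. -/
noncomputable def deltaI {V : Type*} {m : ℕ} (E : Fin m → Sym2 V) : ℕ :=
  sInf (Set.range (dI E))

/-- `L_G`: the number of loop indices. -/
noncomputable def LG {V : Type*} {m : ℕ} (E : Fin m → Sym2 V) : ℕ :=
  Set.ncard {e : Fin m | ∃ v : V, E e = Sym2.diag v}

/-- `δ_ℓ(v)`: the number of loop indices at `v`. -/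
noncomputable def loopsAt {V : Type*} {m : ℕ} (E : Fin m → Sym2 V) (v : V) : ℕ :=
  Set.ncard {e : Fin m | E e = Sym2.diag v}

/-- `Δ_ℓ(G)`: the maximum number of loops at a single vertex. -/
noncomputable def DeltaLoops {V : Type*} {m : ℕ} (E : Fin m → Sym2 V) : ℕ :=
  sSup (Set.range (loopsAt E))

/-- `κ_G`: the edge connectivity. -/
noncomputable def kappaG {V : Type*} {m : ℕ} (E : Fin m → Sym2 V) : ℕ :=
  sInf {k : ℕ | ∃ S : Finset (Fin m), S.card = k ∧ ∃ u v : V, ¬ ConnectedMod E S u v}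

def f16 (n : ℕ) (hn : 0 < n) (a : ℕ) : Fin n := ⟨a % n, Nat.mod_lt a hn⟩

def E16 (n r L : ℕ) (hn : 0 < n) : Fin (r * n) → Sym2 (Fin n) :=
  fun e => if e.val < L then Sym2.diag (f16 n hn e.val)
           else s(f16 n hn e.val, f16 n hn (e.val + 1))

lemma f16_eq (n : ℕ) (hn : 0 < n) {a b : ℕ} (h : a % n = b % n) :
    f16 n hn a = f16 n hn b := by simp [f16, h]

lemma f16_self (n : ℕ) (hn : 0 < n) (u : Fin n) : f16 n hn u.val = u := by
  apply Fin.ext; simp [f16, Nat.mod_eq_of_lt u.isLt]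

lemma E16_edge (n r L : ℕ) (hn : 0 < n) (e : Fin (r * n)) (he : ¬ e.val < L) :
    E16 n r L hn e = s(f16 n hn e.val, f16 n hn (e.val + 1)) := by
  simp [E16, he]

lemma step16 (n r L : ℕ) (hn : 0 < n) (S : Finset (Fin (r * n))) (c : ℕ)
    (e : Fin (r * n)) (he : e ∉ S) (heL : ¬ e.val < L) (hm : e.val % n = c % n) :
    Relation.EqvGen (fun a b => ∃ e : Fin (r * n), e ∉ S ∧ E16 n r L hn e = s(a, b))
      (f16 n hn c) (f16 n hn (c + 1)) := by
  apply Relation.EqvGen.rel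
  refine ⟨e, he, ?_⟩
  rw [E16_edge n r L hn e heL]
  rw [f16_eq n hn hm, f16_eq n hn (Nat.ModEq.add_right 1 hm)]

lemma chain16 (n r L : ℕ) (hn : 0 < n) (S : Finset (Fin (r * n))) (a t : ℕ)
    (h : ∀ i < t, ∃ e : Fin (r * n), e ∉ S ∧ ¬ e.val < L ∧ e.val % n = (a + i) % n) :
    ConnectedMod (E16 n r L hn) S (f16 n hn a) (f16 n hn (a + t)) := by
  induction t with
  | zero => exact Relation.EqvGen.refl _
  | succ t ih =>
    have h1 : ConnectedMod (E16 n r L hn) S (f16 n hn a) (f16 n hn (a + t)) :=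
      ih (fun i hi => h i (by omega))
    obtain ⟨e, he, heL, hm⟩ := h t (by omega)
    have h2 := step16 n r L hn S (a + t) e he heL hm
    exact Relation.EqvGen.trans _ _ _ h1 h2

/-- a non-loop edge over any gap residue exists (index `c % n + n`). -/
lemma gap_edge (n r L : ℕ) (hn : 0 < n) (hr : 2 ≤ r) (hLn : L + 2 ≤ n) (c : ℕ) :
    ∃ e : Fin (r * n), ¬ e.val < L ∧ e.val % n = c % n ∧ n ≤ e.val ∧ e.val < 2 * n := by
  have h2n : 2 * n ≤ r * n := Nat.mul_le_mul_right n hr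
  have hlt : c % n + n < r * n := by
    have := Nat.mod_lt c hn; omega
  refine ⟨⟨c % n + n, hlt⟩, by simp; omega, ?_, by simp, by simp; have := Nat.mod_lt c hn; omega⟩
  simp [Nat.add_mod_right, Nat.mod_mod_of_dvd]

lemma mod_cancel (n a i j : ℕ) (hi : i < n) (hj : j < n)
    (h : (a + i) % n = (a + j) % n) : i = j := by
  have h2 : i % n = j % n := Nat.ModEq.add_left_cancel' a h
  rwa [Nat.mod_eq_of_lt hi, Nat.mod_eq_of_lt hj] at h2

lemma exists_loop_notin (n r L : ℕ) (hn : 0 < n) (hr : 2 ≤ r) (hLn : L + 2 ≤ n)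
    (S : Finset (Fin (r * n))) (hcard : S.card < L) :
    ∃ j : Fin (r * n), j.val < L ∧ j ∉ S := by
  by_contra hcon
  push_neg at hcon
  have h2n : n ≤ r * n := Nat.le_mul_of_pos_left n (by omega)
  have hmap : ∀ j ∈ Finset.range L, (⟨j % (r * n), Nat.mod_lt _ (by omega)⟩ : Fin (r * n)) ∈ S := by
    intro j hj
    have hj' : j < L := Finset.mem_range.mp hj
    have hjrn : j < r * n := by omega
    have := hcon ⟨j % (r * n), Nat.mod_lt _ (by omega)⟩
    simp only [Nat.mod_eq_of_lt hjrn] at this ⊢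
    exact this hj'
  have hinj : Set.InjOn (fun j => (⟨j % (r * n), Nat.mod_lt _ (by omega)⟩ : Fin (r * n)))
      (Finset.range L) := by
    intro a ha b hb hab
    simp only [Finset.coe_range, Set.mem_Iio] at ha hb
    have : a % (r * n) = b % (r * n) := congrArg Fin.val hab
    rwa [Nat.mod_eq_of_lt (by omega), Nat.mod_eq_of_lt (by omega)] at this
  have := Finset.card_le_card_of_injOn _ hmap hinj
  simp at this
  omega

lemma decodA (n r L : ℕ) (hn : 0 < n) (hr : 2 ≤ r) (hLn : L + 2 ≤ n)
    (S : Finset (Fin (r * n))) (hcard : S.card < L) (w0 : ℕ)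
    (h : ∀ w, w % n ≠ w0 % n → ∃ e : Fin (r * n), e ∉ S ∧ ¬ e.val < L ∧ e.val % n = w % n) :
    DecodableMod (E16 n r L hn) S := by
  set b := w0 % n + 1 with hb
  have hconn : ∀ u : Fin n, ConnectedMod (E16 n r L hn) S (f16 n hn b) u := by
    intro u
    set t := (u.val + n - b) % n with ht
    have htn : t < n := Nat.mod_lt _ hn
    have hbt : (b + t) % n = u.val % n := by
      have h1 : (b + t) % n = (b + (u.val + n - b)) % n := by
        conv_rhs => rw [Nat.add_mod, ← Nat.mod_mod_of_dvd (u.val + n - b) (dvd_refl n), ← ht,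
          ← Nat.add_mod]
      rw [h1]
      have hble : b ≤ u.val + n := by have := Nat.mod_lt w0 hn; omega
      have : b + (u.val + n - b) = u.val + n := by omega
      rw [this, Nat.add_mod_right]
    have hchain := chain16 n r L hn S b t ?_
    · have : f16 n hn (b + t) = u := by
        rw [f16_eq n hn hbt, f16_self]
      rwa [this] at hchain
    · intro i hi
      have hne : (b + i) % n ≠ w0 % n := by
        intro hcon
        have harr : w0 % n + (1 + i) = b + i := by omega
        have : (w0 % n + (1 + i)) % n = (w0 % n + 0) % n := by
          rw [Nat.add_zero, Nat.mod_mod_of_dvd w0 (dvd_refl n), harr, hcon]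
        have := mod_cancel n (w0 % n) (1 + i) 0 (by omega) (by omega) this
        omega
      obtain ⟨e, he, heL, hm⟩ := h (b + i) hne
      exact ⟨e, he, heL, hm⟩
  obtain ⟨j, hjL, hjS⟩ := exists_loop_notin n r L hn hr hLn S hcard
  intro u
  refine ⟨f16 n hn j.val, ⟨j, hjS, ?_⟩, ?_⟩
  · simp [IsLoopIdx, E16, hjL]
  · exact Relation.EqvGen.trans _ _ _ (Relation.EqvGen.symm _ _ (hconn u))
      (hconn (f16 n hn j.val))

lemma decodB (n r L : ℕ) (hn : 0 < n) (hr : 2 ≤ r) (hLn : L + 2 ≤ n)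
    (S : Finset (Fin (r * n))) (w0 w1 : ℕ) (hw0 : w0 < n) (hw1 : w1 < n)
    (hw0L : w0 < L) (hw1L : w1 < L)
    (hSsub : ∀ e ∈ S, ¬ e.val < L ∧ (e.val % n = w0 ∨ e.val % n = w1)) :
    DecodableMod (E16 n r L hn) S := by
  intro u
  set w := u.val with hwdef
  have hwn : w < n := u.isLt
  set t0 := (w0 + n - w) % n with ht0
  set t1 := (w1 + n - w) % n with ht1
  have ht0n : t0 < n := Nat.mod_lt _ hn
  have ht1n : t1 < n := Nat.mod_lt _ hn
  have key : ∀ (z tz : ℕ), z < n → tz = (z + n - w) % n → (w + tz) % n = z := by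
    intro z tz hz htz
    have h1 : (w + tz) % n = (w + (z + n - w)) % n := by
      conv_rhs => rw [Nat.add_mod, ← Nat.mod_mod_of_dvd (z + n - w) (dvd_refl n), ← htz,
        ← Nat.add_mod]
    rw [h1]
    have : w + (z + n - w) = z + n := by omega
    rw [this, Nat.add_mod_right, Nat.mod_eq_of_lt hz]
  have hk0 : (w + t0) % n = w0 := key w0 t0 hw0 ht0
  have hk1 : (w + t1) % n = w1 := key w1 t1 hw1 ht1
  have hgaps : ∀ i < min t0 t1, ∃ e : Fin (r * n), e ∉ S ∧ ¬ e.val < L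
      ∧ e.val % n = (w + i) % n := by
    intro i hi
    obtain ⟨e, heL, hm, -, -⟩ := gap_edge n r L hn hr hLn (w + i)
    refine ⟨e, ?_, heL, hm⟩
    intro heS
    obtain ⟨-, hres⟩ := hSsub e heS
    rcases hres with hres | hres
    · rw [hm] at hres
      rw [← hk0] at hres
      exact absurd (mod_cancel n w i t0 (by omega) ht0n (by
        rw [← Nat.mod_eq_of_lt (show (w+i) % n < n from Nat.mod_lt _ hn)] at hres
        simpa [Nat.mod_mod_of_dvd] using hres)) (by omega)
    · rw [hm] at hres
      rw [← hk1] at hres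
      exact absurd (mod_cancel n w i t1 (by omega) ht1n (by
        rw [← Nat.mod_eq_of_lt (show (w+i) % n < n from Nat.mod_lt _ hn)] at hres
        simpa [Nat.mod_mod_of_dvd] using hres)) (by omega)
  have hchain := chain16 n r L hn S w (min t0 t1) hgaps
  rw [f16_self n hn u] at hchain
  -- target vertex
  rcases Nat.le_total t0 t1 with hle | hle
  · rw [min_eq_left hle] at hchain
    have hv : f16 n hn (w + t0) = f16 n hn w0 := f16_eq n hn (by
      rw [hk0, Nat.mod_eq_of_lt hw0])
    rw [hv] at hchain
    have hw0rn : w0 < r * n := by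
      have : n ≤ r * n := Nat.le_mul_of_pos_left n (by omega); omega
    refine ⟨f16 n hn w0, ⟨⟨w0, hw0rn⟩, ?_, ?_⟩, hchain⟩
    · intro hmem; exact (hSsub _ hmem).1 hw0L
    · simp [IsLoopIdx, E16, hw0L]
  · rw [min_eq_right hle] at hchain
    have hv : f16 n hn (w + t1) = f16 n hn w1 := f16_eq n hn (by
      rw [hk1, Nat.mod_eq_of_lt hw1])
    rw [hv] at hchain
    have hw1rn : w1 < r * n := by
      have : n ≤ r * n := Nat.le_mul_of_pos_left n (by omega); omega
    refine ⟨f16 n hn w1, ⟨⟨w1, hw1rn⟩, ?_, ?_⟩, hchain⟩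
    · intro hmem; exact (hSsub _ hmem).1 hw1L
    · simp [IsLoopIdx, E16, hw1L]


lemma card_res (n r w : ℕ) (hn : 0 < n) (hr : 0 < r) (hw : w < n) :
    (Finset.univ.filter (fun e : Fin (r * n) => e.val % n = w)).card = r := by
  have hrn : 0 < r * n := Nat.mul_pos hr hn
  have key : (Finset.univ.filter (fun e : Fin (r * n) => e.val % n = w)).card
      = (Finset.range r).card := by
    apply Finset.card_nbij' (fun e => e.val / n)
      (fun a => (⟨(w + a * n) % (r * n), Nat.mod_lt _ hrn⟩ : Fin (r * n)))
    · intro e he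
      have he' := (Finset.mem_filter.mp he).2
      exact Finset.mem_range.mpr (Nat.div_lt_of_lt_mul (by have := e.isLt; exact Nat.lt_of_lt_of_le this (le_of_eq (Nat.mul_comm r n))))
    · intro a ha
      have ha' : a < r := Finset.mem_range.mp ha
      have hlt : w + a * n < r * n := by
        calc w + a * n < n + a * n := by omega
          _ = (a + 1) * n := by ring
          _ ≤ r * n := Nat.mul_le_mul_right n ha'
      simp [Nat.mod_eq_of_lt hlt, Nat.add_mul_mod_self_right, Nat.mod_eq_of_lt hw]
    · intro e he
      have he' := (Finset.mem_filter.mp he).2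
      apply Fin.ext
      simp only []
      have : w + e.val / n * n = e.val := by
        conv_rhs => rw [← Nat.div_add_mod e.val n]; rw [he']
        ring
      rw [this, Nat.mod_eq_of_lt e.isLt]
    · intro a ha
      have ha' : a < r := Finset.mem_range.mp ha
      have hlt : w + a * n < r * n := by
        calc w + a * n < n + a * n := by omega
          _ = (a + 1) * n := by ring
          _ ≤ r * n := Nat.mul_le_mul_right n ha'
      simp [Nat.mod_eq_of_lt hlt, Nat.add_mul_div_right _ _ hn, Nat.div_eq_of_lt hw]
  simpa using key

lemma card_loopres (n r w L : ℕ) (hn : 0 < n) (hr : 0 < r) (hw : w < n) (hLn : L ≤ n) :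
    (Finset.univ.filter (fun e : Fin (r * n) => e.val % n = w ∧ e.val < L)).card
      = if w < L then 1 else 0 := by
  split_ifs with h
  · rw [Finset.card_eq_one]
    have hwrn : w < r * n := by
      calc w < n := hw
        _ ≤ r * n := Nat.le_mul_of_pos_left n hr
    refine ⟨⟨w, hwrn⟩, ?_⟩
    ·
      ext e
      simp only [Finset.mem_filter, Finset.mem_univ, true_and, Finset.mem_singleton]
      constructor
      · rintro ⟨h1, h2⟩
        apply Fin.ext
        have : e.val < n := lt_of_lt_of_le h2 hLn
        simpa [Nat.mod_eq_of_lt this] using h1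
      · rintro rfl
        exact ⟨by simp [Nat.mod_eq_of_lt hw], h⟩
  · rw [Finset.card_eq_zero]
    ext e
    simp only [Finset.mem_filter, Finset.mem_univ, true_and, Finset.notMem_empty, iff_false]
    rintro ⟨h1, h2⟩
    have : e.val < n := lt_of_lt_of_le h2 hLn
    rw [Nat.mod_eq_of_lt this] at h1
    exact absurd (h1 ▸ h2) h

lemma card_gap (n r w L : ℕ) (hn : 0 < n) (hr : 0 < r) (hw : w < n) (hLn : L ≤ n) :
    (Finset.univ.filter (fun e : Fin (r * n) => ¬ e.val < L ∧ e.val % n = w)).card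
      = r - (if w < L then 1 else 0) := by
  have key := Finset.card_filter_add_card_filter_not
    (s := Finset.univ.filter (fun e : Fin (r * n) => e.val % n = w))
    (p := fun e => e.val < L)
  rw [Finset.filter_filter, Finset.filter_filter, card_res n r w hn hr hw] at key
  rw [card_loopres n r w L hn hr hw hLn] at key
  have : (Finset.univ.filter (fun e : Fin (r * n) => ¬ e.val < L ∧ e.val % n = w))
      = (Finset.univ.filter (fun e : Fin (r * n) => e.val % n = w ∧ ¬ e.val < L)) := by
    apply Finset.filter_congr; intro e _; simp [and_comm]
  rw [this]
  omega

lemma decodable_small (n r L : ℕ) (hn : 0 < n) (hr : 2 ≤ r) (hL : 2 * r - 1 ≤ L)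
    (hLn : L + 2 ≤ n) (S : Finset (Fin (r * n))) (hS : S.card ≤ 2 * r - 2) :
    DecodableMod (E16 n r L hn) S := by
  classical
  set M : ℕ → Finset (Fin (r * n)) :=
    fun w => Finset.univ.filter (fun e => ¬ e.val < L ∧ e.val % n = w) with hM
  have hcardM : ∀ w < n, (M w).card = r - (if w < L then 1 else 0) :=
    fun w hw => card_gap n r w L hn (by omega) hw (by omega)
  by_cases hex : ∃ w0, w0 < n ∧ ∃ w1, w1 < n ∧ w0 ≠ w1 ∧ M w0 ⊆ S ∧ M w1 ⊆ S
  · obtain ⟨w0, hw0n, w1, hw1n, hne, hsub0, hsub1⟩ := hex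
    have hdisj : Disjoint (M w0) (M w1) := by
      rw [Finset.disjoint_left]
      intro e he0 he1
      rw [hM] at he0 he1
      simp only [Finset.mem_filter] at he0 he1
      exact hne (he0.2.2 ▸ he1.2.2)
    have hunion : M w0 ∪ M w1 ⊆ S := Finset.union_subset hsub0 hsub1
    have hcardu : (M w0 ∪ M w1).card = (M w0).card + (M w1).card :=
      Finset.card_union_of_disjoint hdisj
    have hc0 := hcardM w0 hw0n
    have hc1 := hcardM w1 hw1n
    have hcle := Finset.card_le_card hunion
    have hw0L : w0 < L := by
      by_contra hcon
      simp only [if_neg hcon] at hc0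
      split_ifs at hc1 <;> omega
    have hw1L : w1 < L := by
      by_contra hcon
      simp only [if_neg hcon] at hc1
      split_ifs at hc0 <;> omega
    rw [if_pos hw0L] at hc0; rw [if_pos hw1L] at hc1
    have hSeq : S = M w0 ∪ M w1 :=
      (Finset.eq_of_subset_of_card_le hunion (by omega)).symm
    apply decodB n r L hn hr hLn S w0 w1 hw0n hw1n hw0L hw1L
    intro e heS
    rw [hSeq, Finset.mem_union, hM] at heS
    simp only [Finset.mem_filter] at heS
    rcases heS with h | h
    · exact ⟨h.2.1, Or.inl h.2.2⟩
    · exact ⟨h.2.1, Or.inr h.2.2⟩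
  · push_neg at hex
    have hcard : S.card < L := by omega
    by_cases hone : ∃ w0, w0 < n ∧ M w0 ⊆ S
    · obtain ⟨w0, hw0n, hsub0⟩ := hone
      apply decodA n r L hn hr hLn S hcard w0
      intro w hwne
      have hw' : w % n < n := Nat.mod_lt _ hn
      have hne2 : w % n ≠ w0 := fun h => hwne (by rw [h, Nat.mod_eq_of_lt hw0n])
      have : ¬ M (w % n) ⊆ S := hex w0 hw0n (w % n) hw' (fun h => hne2 h.symm) hsub0
      obtain ⟨e, heM, heS⟩ := Finset.not_subset.mp this
      rw [hM] at heM
      simp only [Finset.mem_filter] at heM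
      exact ⟨e, heS, heM.2.1, heM.2.2⟩
    · push_neg at hone
      apply decodA n r L hn hr hLn S hcard 0
      intro w _
      have hw' : w % n < n := Nat.mod_lt _ hn
      obtain ⟨e, heM, heS⟩ := Finset.not_subset.mp (hone (w % n) hw')
      rw [hM] at heM
      simp only [Finset.mem_filter] at heM
      exact ⟨e, heS, heM.2.1, heM.2.2⟩

lemma mem_E16_iff (n r L : ℕ) (hn : 0 < n) (v : Fin n) (e : Fin (r * n)) (hLn : L ≤ n) :
    v ∈ E16 n r L hn e ↔ ((e.val < L ∧ e.val % n = v.val) ∨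
      (¬ e.val < L ∧ (e.val % n = v.val ∨ (e.val + 1) % n = v.val))) := by
  have hf : ∀ a : ℕ, (f16 n hn a = v) ↔ a % n = v.val := by
    intro a
    rw [Fin.ext_iff]
    rfl
  unfold E16
  split_ifs with h
  · rw [Sym2.diag, Sym2.mem_iff]
    constructor
    · rintro (h1 | h1) <;> exact Or.inl ⟨h, (hf _).mp h1.symm⟩
    · rintro (⟨-, h1⟩ | ⟨h2, -⟩)
      · exact Or.inl ((hf _).mpr h1).symm
      · exact absurd h h2
  · rw [Sym2.mem_iff]
    constructor
    · rintro (h1 | h1)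
      · exact Or.inr ⟨h, Or.inl ((hf _).mp h1.symm)⟩
      · exact Or.inr ⟨h, Or.inr ((hf _).mp h1.symm)⟩
    · rintro (⟨h2, -⟩ | ⟨-, h1 | h1⟩)
      · exact absurd h2 h
      · exact Or.inl ((hf _).mpr h1).symm
      · exact Or.inr ((hf _).mpr h1).symm

lemma card_inc (n r L : ℕ) (hn : 0 < n) (hr : 2 ≤ r) (hLn : L + 2 ≤ n) (v : Fin n) :
    (Finset.univ.filter (fun e : Fin (r * n) => v ∈ E16 n r L hn e)).card
      = 2 * r - (if (v.val + n - 1) % n < L then 1 else 0) := by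
  classical
  set w := v.val with hw
  have hwn : w < n := v.isLt
  set p := (w + n - 1) % n with hp
  have hpn : p < n := Nat.mod_lt _ hn
  have hwp : w ≠ p := by
    intro hcon
    have harr : w + n - 1 = w + (n - 1) := by omega
    have : (w + (n - 1)) % n = (w + 0) % n := by
      rw [← harr, ← hp, ← hcon, Nat.add_zero, Nat.mod_eq_of_lt hwn]
    have := mod_cancel n w (n - 1) 0 (by omega) (by omega) this
    omega
  have hsucc : ∀ e : Fin (r * n), (e.val + 1) % n = w ↔ e.val % n = p := by
    intro e
    have hkey : ((w + n - 1) + 1) % n = w := by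
      have : w + n - 1 + 1 = w + n := by omega
      rw [this, Nat.add_mod_right, Nat.mod_eq_of_lt hwn]
    constructor
    · intro h
      have : (e.val + 1) % n = ((w + n - 1) + 1) % n := by rw [h, hkey]
      have := Nat.ModEq.add_right_cancel' 1 this
      rw [this, hp]
    · intro h
      have hmeq : e.val % n = (w + n - 1) % n := by rw [h, hp]
      have : (e.val + 1) % n = ((w + n - 1) + 1) % n := Nat.ModEq.add_right 1 hmeq
      rw [this, hkey]
  have hset : (Finset.univ.filter (fun e : Fin (r * n) => v ∈ E16 n r L hn e))
      = (Finset.univ.filter (fun e : Fin (r * n) => e.val % n = w))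
        ∪ (Finset.univ.filter (fun e : Fin (r * n) => ¬ e.val < L ∧ e.val % n = p)) := by
    ext e
    simp only [Finset.mem_filter, Finset.mem_univ, true_and, Finset.mem_union]
    rw [mem_E16_iff n r L hn v e (by omega)]
    constructor
    · rintro (⟨-, h1⟩ | ⟨h2, h1 | h1⟩)
      · exact Or.inl h1
      · exact Or.inl h1
      · exact Or.inr ⟨h2, (hsucc e).mp h1⟩
    · rintro (h1 | ⟨h2, h1⟩)
      · by_cases he : e.val < L
        · exact Or.inl ⟨he, h1⟩
        · exact Or.inr ⟨he, Or.inl h1⟩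
      · exact Or.inr ⟨h2, Or.inr ((hsucc e).mpr h1)⟩
  have hdisj : Disjoint (Finset.univ.filter (fun e : Fin (r * n) => e.val % n = w))
      (Finset.univ.filter (fun e : Fin (r * n) => ¬ e.val < L ∧ e.val % n = p)) := by
    rw [Finset.disjoint_left]
    intro e he1 he2
    simp only [Finset.mem_filter] at he1 he2
    exact hwp (he1.2 ▸ he2.2.2)
  rw [hset, Finset.card_union_of_disjoint hdisj, card_res n r w hn (by omega) hwn,
    card_gap n r p L hn (by omega) hpn (by omega)]
  split_ifs <;> omega

lemma dI_eq_card {V : Type*} {m : ℕ} (E : Fin m → Sym2 V) (v : V)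
    [DecidablePred fun e : Fin m => v ∈ E e] :
    dI E v = (Finset.univ.filter (fun e => v ∈ E e)).card := by
  rw [dI]
  have : {e : Fin m | v ∈ E e} = ↑(Finset.univ.filter (fun e => v ∈ E e)) := by
    ext e; simp
  rw [this, Set.ncard_coe_finset]

lemma dI16 (n r L : ℕ) (hn : 0 < n) (hr : 2 ≤ r) (hLn : L + 2 ≤ n) (v : Fin n) :
    dI (E16 n r L hn) v = 2 * r - (if (v.val + n - 1) % n < L then 1 else 0) := by
  classical
  rw [dI_eq_card]
  exact card_inc n r L hn hr hLn v

lemma eqvgen_isolated {V : Type*} {m : ℕ} (E : Fin m → Sym2 V) (S : Finset (Fin m)) (x : V)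
    (hx : ∀ e, x ∈ E e → e ∈ S) (a b : V)
    (h : Relation.EqvGen (fun a b => ∃ e : Fin m, e ∉ S ∧ E e = s(a, b)) a b) :
    (a = x → b = x) ∧ (b = x → a = x) := by
  induction h with
  | rel a b hab =>
    obtain ⟨e, heS, hE⟩ := hab
    refine ⟨fun ha => ?_, fun hb => ?_⟩
    · refine absurd (hx e ?_) heS
      rw [hE, ← ha]
      exact Sym2.mem_mk_left a b
    · refine absurd (hx e ?_) heS
      rw [hE, ← hb]
      exact Sym2.mem_mk_right a b
  | refl a => exact ⟨id, id⟩
  | symm a b _ ih => exact ⟨ih.2, ih.1⟩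
  | trans a b c _ _ ih1 ih2 => exact ⟨fun h => ih2.1 (ih1.1 h), fun h => ih1.2 (ih2.2 h)⟩

lemma undecodable16 (n r L : ℕ) (hn : 0 < n) (hr : 2 ≤ r) (hL : 2 * r - 1 ≤ L)
    (hLn : L + 2 ≤ n) :
    ∃ S : Finset (Fin (r * n)), S.card = 2 * r - 1 ∧ ¬ DecodableMod (E16 n r L hn) S := by
  classical
  have hL3 : 3 ≤ L := by omega
  refine ⟨Finset.univ.filter (fun e => f16 n hn 1 ∈ E16 n r L hn e), ?_, ?_⟩
  · rw [card_inc n r L hn hr hLn (f16 n hn 1)]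
    have h1 : (f16 n hn 1).val = 1 := by
      simp [f16, Nat.mod_eq_of_lt (show 1 < n by omega)]
    rw [h1]
    have : (1 + n - 1) % n = 0 := by
      have : 1 + n - 1 = n := by omega
      rw [this, Nat.mod_self]
    rw [this, if_pos (by omega)]
  · intro hdec
    obtain ⟨v, ⟨e, heS, heloop⟩, hconn⟩ := hdec (f16 n hn 1)
    have hx : ∀ e' : Fin (r * n), f16 n hn 1 ∈ E16 n r L hn e' →
        e' ∈ Finset.univ.filter (fun e => f16 n hn 1 ∈ E16 n r L hn e) := by
      intro e' h; simp [h]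
    have hveq := (eqvgen_isolated _ _ _ hx _ _ hconn).1 rfl
    subst hveq
    apply heS
    apply hx
    rw [heloop]
    exact Sym2.mem_mk_left _ _

lemma card_lowfilter (n r L : ℕ) (hn : 0 < n) (hr : 2 ≤ r) (hLn : L + 2 ≤ n) :
    (Finset.univ.filter (fun e : Fin (r * n) => e.val < L)).card = L := by
  have hrn : L < r * n := by
    have : n ≤ r * n := Nat.le_mul_of_pos_left n (by omega); omega
  have key : (Finset.univ.filter (fun e : Fin (r * n) => e.val < L)).card
      = (Finset.range L).card := by
    apply Finset.card_nbij' (fun e => e.val)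
      (fun a => (⟨a % (r * n), Nat.mod_lt _ (by omega)⟩ : Fin (r * n)))
    · intro e he
      exact Finset.mem_range.mpr (Finset.mem_filter.mp he).2
    · intro a ha
      have ha' : a < L := Finset.mem_range.mp ha
      simp only [Finset.mem_filter, Finset.mem_univ, true_and]
      simp [Nat.mod_eq_of_lt (show a < r * n by omega), ha']
    · intro e he
      apply Fin.ext
      simp [Nat.mod_eq_of_lt e.isLt]
    · intro a ha
      have ha' : a < L := Finset.mem_range.mp ha
      simp [Nat.mod_eq_of_lt (show a < r * n by omega)]
  simpa using key

lemma LG16 (n r L : ℕ) (hn : 0 < n) (hr : 2 ≤ r) (hLn : L + 2 ≤ n) :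
    LG (E16 n r L hn) = L := by
  classical
  rw [LG]
  have hset : {e : Fin (r * n) | ∃ v : Fin n, E16 n r L hn e = Sym2.diag v}
      = ↑(Finset.univ.filter (fun e : Fin (r * n) => e.val < L)) := by
    ext e
    simp only [Set.mem_setOf_eq, Finset.coe_filter, Finset.mem_univ, true_and]
    constructor
    · rintro ⟨v, hv⟩
      by_contra he
      rw [E16_edge n r L hn e he, Sym2.diag] at hv
      rw [Sym2.eq_iff] at hv
      have : f16 n hn e.val = f16 n hn (e.val + 1) := by
        rcases hv with ⟨h1, h2⟩ | ⟨h1, h2⟩ <;> rw [h1, h2]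
      have hmod : (e.val + 0) % n = (e.val + 1) % n := by
        simpa [f16] using congrArg Fin.val this
      have := mod_cancel n e.val 0 1 (by omega) (by omega) hmod
      omega
    · intro he
      exact ⟨f16 n hn e.val, by simp [E16, he]⟩
  rw [hset, Set.ncard_coe_finset]
  exact card_lowfilter n r L hn hr hLn

lemma main16 (n r L : ℕ) (hr : 2 ≤ r) (hL : 2 * r - 1 ≤ L) (hLn : L + 2 ≤ n) :
    ∃ E : Fin (r * n) → Sym2 (Fin n),
      DecodableMod E ∅ ∧ LG E = L ∧ mCut E = 2 * r - 1 ∧ deltaI E = 2 * r - 1 := by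
  have hn : 0 < n := by omega
  refine ⟨E16 n r L hn, ?_, LG16 n r L hn hr hLn, ?_, ?_⟩
  · exact decodable_small n r L hn hr hL hLn ∅ (by simp)
  · obtain ⟨S1, hc, hundec⟩ := undecodable16 n r L hn hr hL hLn
    have hmem : 2 * r - 1 ∈ {c : ℕ | ∃ S : Finset (Fin (r * n)), S.card = c
        ∧ ¬ DecodableMod (E16 n r L hn) S} := ⟨S1, hc, hundec⟩
    refine le_antisymm (Nat.sInf_le hmem) (le_csInf ⟨_, hmem⟩ ?_)
    rintro c ⟨S, rfl, hS⟩
    by_contra hlt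
    push_neg at hlt
    exact hS (decodable_small n r L hn hr hL hLn S (by omega))
  · have h1 : (f16 n hn 1).val = 1 := by
      simp [f16, Nat.mod_eq_of_lt (show 1 < n by omega)]
    have hd1 : dI (E16 n r L hn) (f16 n hn 1) = 2 * r - 1 := by
      rw [dI16 n r L hn hr hLn, h1]
      have hmod : (1 + n - 1) % n = 0 := by
        have : 1 + n - 1 = n := by omega
        rw [this, Nat.mod_self]
      rw [hmod, if_pos (by omega)]
    rw [deltaI]
    refine le_antisymm (Nat.sInf_le ⟨f16 n hn 1, hd1⟩) (le_csInf ⟨_, ⟨f16 n hn 1, rfl⟩⟩ ?_)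
    rintro x ⟨v, rfl⟩
    rw [dI16 n r L hn hr hLn]
    split_ifs <;> omega

theorem stmt16 (k r s L : ℕ) (hk : 2 ≤ k) (hr : 2 ≤ r) (hs : 2 ≤ s)
    (hL1 : max k (2 * r - 1) ≤ L) (hL2 : L ≤ (s - 1) * k) :
    ∃ E : Fin (r * (s * k)) → Sym2 (Fin (s * k)),
      IsDecodable E ∧ LG E = L ∧ mCut E = 2 * r - 1 ∧ deltaI E = 2 * r - 1 := by
  have hL : 2 * r - 1 ≤ L := le_trans (le_max_right _ _) hL1
  have hLn : L + 2 ≤ s * k := by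
    have h1 : (s - 1) * k + k = s * k := by
      cases s with
      | zero => omega
      | succ s => simp [Nat.succ_sub_one, Nat.succ_mul]
    omega
  obtain ⟨E, h1, h2, h3, h4⟩ := main16 (s * k) r L hr hL hLn
  exact ⟨E, h1, h2, h3, h4⟩
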